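/- Let k > 0 and Δ ∈ ℝ with |Δ| < 2k, and set ψ* = (1/(2π))·arcsin(Δ/(2k)) ∈ (−1/4, 1/4). Let ψ : [0,∞) → ℝ be differentiable with ψ'(t) = Δ − 2k·sin(2π·ψ(t)) for all t ≥ 0 and ψ(0) ∈ (−1/2 − ψ*, 1/2 − ψ*). Then lim_{t→∞} ψ(t) = ψ*. In particular, if ε ∈ (0, 1/2) and arcsin(|Δ|/(2k)) < 2πε, then |ψ*| < ε and there exists T ≥ 0 such that |ψ(t)| < ε for all t ≥ T (the oscillators eventually phase synchronize to within ε). -/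

import Mathlib

open Filter Topology

private lemma sin_diff_le_aux (a b : ℝ) : |Real.sin a - Real.sin b| ≤ |a - b| := by
  rw [Real.sin_sub_sin, abs_mul, abs_mul, abs_two]
  have h1 : |Real.sin ((a - b) / 2)| ≤ |a - b| / 2 := by
    have := Real.abs_sin_le_abs (x := (a - b) / 2)
    rwa [abs_div, abs_two] at this
  have h2 : |Real.cos ((a + b) / 2)| ≤ 1 := Real.abs_cos_le_one _
  nlinarith [abs_nonneg (Real.sin ((a - b) / 2)), abs_nonneg (a - b)]

private lemma sin_lt_of_mem_aux {θ0 θ : ℝ} (h1 : -(Real.pi/2) < θ0) (h2 : θ0 < Real.pi/2)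
    (ha : -Real.pi - θ0 < θ) (hb : θ < θ0) : Real.sin θ < Real.sin θ0 := by
  have hπ := Real.pi_pos
  rw [← sub_pos, Real.sin_sub_sin]
  have hs : 0 < Real.sin ((θ0 - θ)/2) :=
    Real.sin_pos_of_pos_of_lt_pi (by linarith) (by linarith)
  have hc : 0 < Real.cos ((θ0 + θ)/2) :=
    Real.cos_pos_of_mem_Ioo ⟨by linarith, by linarith⟩
  positivity

private lemma sin_gt_of_mem_aux {θ0 θ : ℝ} (h1 : -(Real.pi/2) < θ0) (h2 : θ0 < Real.pi/2)
    (ha : θ0 < θ) (hb : θ < Real.pi - θ0) : Real.sin θ0 < Real.sin θ := by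
  have hπ := Real.pi_pos
  rw [← sub_pos, Real.sin_sub_sin]
  have hs : 0 < Real.sin ((θ - θ0)/2) :=
    Real.sin_pos_of_pos_of_lt_pi (by linarith) (by linarith)
  have hc : 0 < Real.cos ((θ + θ0)/2) :=
    Real.cos_pos_of_mem_Ioo ⟨by linarith, by linarith⟩
  positivity

set_option maxHeartbeats 1600000 in
/-- One-sided version: if moreover `ψ* ≤ ψ 0`, the solution converges to `ψ*`. -/
private lemma oscillators_aux
    (k Δ : ℝ) (hk : 0 < k) (hΔ : |Δ| < 2 * k)
    (ψstar : ℝ) (hψstar : ψstar = Real.arcsin (Δ / (2 * k)) / (2 * Real.pi))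
    (ψ : ℝ → ℝ)
    (hψ : ∀ t : ℝ, 0 ≤ t →
      HasDerivAt ψ (Δ - 2 * k * Real.sin (2 * Real.pi * ψ t)) t)
    (h0 : ψ 0 ∈ Set.Ioo (-(1 / 2) - ψstar) (1 / 2 - ψstar))
    (hge : ψstar ≤ ψ 0) :
    Tendsto ψ atTop (𝓝 ψstar) := by
  have hπ := Real.pi_pos
  have hk2 : (0:ℝ) < 2 * k := by linarith
  have habs : |Δ / (2 * k)| < 1 := by
    rw [abs_div, abs_of_pos hk2]
    exact (div_lt_one hk2).mpr hΔ
  obtain ⟨hm1, hm2⟩ := abs_le.mp habs.le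
  obtain ⟨hl1, hl2⟩ := abs_lt.mp habs
  set θ0 := Real.arcsin (Δ / (2 * k)) with hθ0def
  have hsin : Real.sin θ0 = Δ / (2 * k) := Real.sin_arcsin hm1 hm2
  have hθl : -(Real.pi/2) < θ0 := Real.neg_pi_div_two_lt_arcsin.mpr hl1
  have hθu : θ0 < Real.pi/2 := Real.arcsin_lt_pi_div_two.mpr hl2
  have hθψ : θ0 = 2 * Real.pi * ψstar := by
    rw [hψstar]; field_simp
  have hΔeq : Δ = 2 * k * Real.sin θ0 := by rw [hsin]; field_simp
  obtain ⟨vf, hvf⟩ : ∃ vf : ℝ → ℝ, vf = fun x => Δ - 2 * k * Real.sin (2 * Real.pi * x) :=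
    ⟨_, rfl⟩
  have hψ' : ∀ t : ℝ, 0 ≤ t → HasDerivAt ψ (vf (ψ t)) t := by
    simp only [hvf]; exact hψ
  -- sign facts
  have vneg : ∀ x : ℝ, ψstar < x → x < 1/2 - ψstar → vf x < 0 := by
    intro x hx1 hx2
    have h1 : θ0 < 2 * Real.pi * x := by rw [hθψ]; nlinarith
    have h2 : 2 * Real.pi * x < Real.pi - θ0 := by rw [hθψ]; nlinarith
    have := sin_gt_of_mem_aux hθl hθu h1 h2
    simp only [hvf]
    nlinarith
  have vz_star : vf ψstar = 0 := by
    simp only [hvf]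
    rw [← hθψ, hsin]; field_simp; ring
  -- Lipschitz
  obtain ⟨K, hcoe⟩ : ∃ K : NNReal, (K : ℝ) = 4 * k * Real.pi :=
    ⟨⟨4 * k * Real.pi, by positivity⟩, rfl⟩
  have hlipW : LipschitzWith K vf := by
    apply LipschitzWith.of_dist_le_mul
    intro x y
    rw [Real.dist_eq, Real.dist_eq, hcoe]
    have h1 : vf x - vf y = 2 * k * (Real.sin (2 * Real.pi * y) - Real.sin (2 * Real.pi * x)) := by
      simp only [hvf]; ring
    rw [h1, abs_mul, abs_of_pos hk2]
    have h2 := sin_diff_le_aux (2 * Real.pi * y) (2 * Real.pi * x)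
    have h3 : |2 * Real.pi * y - 2 * Real.pi * x| = 2 * Real.pi * |x - y| := by
      rw [abs_sub_comm, show 2 * Real.pi * x - 2 * Real.pi * y = (2 * Real.pi) * (x - y) by ring,
        abs_mul, abs_of_pos (by positivity : (0:ℝ) < 2 * Real.pi)]
    nlinarith [abs_nonneg (x - y)]
  have hlip : ∀ t : ℝ, LipschitzOnWith K vf Set.univ := fun _ => hlipW.lipschitzOnWith
  -- uniqueness helpers
  have fwd : ∀ c t1 t2 : ℝ, vf c = 0 → 0 ≤ t1 → t1 ≤ t2 → ψ t1 = c → ψ t2 = c := by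
    intro c t1 t2 hc h1 h12 he
    have := ODE_solution_unique_of_mem_Icc_right (v := fun _ => vf) (s := fun _ => Set.univ)
      (K := K) (f := ψ) (g := fun _ => c) (a := t1) (b := t2) (fun t _ => hlip t)
      (fun τ hτ => (hψ' τ (h1.trans hτ.1)).continuousAt.continuousWithinAt)
      (fun τ hτ => (hψ' τ (h1.trans hτ.1)).hasDerivWithinAt)
      (fun _ _ => Set.mem_univ _)
      continuousOn_const
      (fun τ _ => by simpa [hc] using (hasDerivWithinAt_const τ (Set.Ici τ) c))
      (fun _ _ => Set.mem_univ _) he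
    exact this ⟨h12, le_rfl⟩
  have bwd : ∀ c t1 : ℝ, vf c = 0 → 0 ≤ t1 → ψ t1 = c → ψ 0 = c := by
    intro c t1 hc h1 he
    have := ODE_solution_unique_of_mem_Icc_left (v := fun _ => vf) (s := fun _ => Set.univ)
      (K := K) (f := ψ) (g := fun _ => c) (a := 0) (b := t1) (fun t _ => hlip t)
      (fun τ hτ => (hψ' τ hτ.1).continuousAt.continuousWithinAt)
      (fun τ hτ => (hψ' τ hτ.1.le).hasDerivWithinAt)
      (fun _ _ => Set.mem_univ _)
      continuousOn_const
      (fun τ _ => by simpa [hc] using (hasDerivWithinAt_const τ (Set.Iic τ) c))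
      (fun _ _ => Set.mem_univ _) he
    exact this ⟨le_rfl, h1⟩
  -- upper barrier is an equilibrium
  have vz_b : vf (1/2 - ψstar) = 0 := by
    have harg : 2 * Real.pi * (1/2 - ψstar) = Real.pi - θ0 := by rw [hθψ]; ring
    simp only [hvf]
    rw [harg, Real.sin_pi_sub, hsin]; field_simp; ring
  -- invariance: ψ stays below the upper barrier
  have hub : ∀ t : ℝ, 0 ≤ t → ψ t < 1/2 - ψstar := by
    intro t ht
    by_contra hge'
    push_neg at hge'
    have hmem : (1/2 - ψstar) ∈ Set.Icc (ψ 0) (ψ t) := ⟨h0.2.le, hge'⟩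
    obtain ⟨t1, ht1, he⟩ := intermediate_value_Icc ht
      (fun τ hτ => (hψ' τ hτ.1).continuousAt.continuousWithinAt) hmem
    have := bwd _ t1 vz_b ht1.1 he
    exact absurd h0.2 (by rw [this]; exact lt_irrefl _)
  -- case: the solution hits ψ*
  by_cases hhit : ∃ t1 : ℝ, 0 ≤ t1 ∧ ψ t1 = ψstar
  · obtain ⟨t1, ht1, he⟩ := hhit
    have hev : ∀ᶠ t in atTop, (fun _ => ψstar) t = ψ t :=
      eventually_atTop.mpr ⟨t1, fun t ht => (fwd ψstar t1 t vz_star ht1 ht he).symm⟩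
    exact (tendsto_const_nhds : Tendsto (fun _ => ψstar) atTop (𝓝 ψstar)).congr' hev
  · push_neg at hhit
    have hψ0gt : ψstar < ψ 0 := lt_of_le_of_ne hge (Ne.symm (hhit 0 le_rfl))
    have hstay : ∀ t : ℝ, 0 ≤ t → ψstar < ψ t := by
      intro t ht
      by_contra h'
      push_neg at h'
      have hmem : ψstar ∈ Set.Icc (ψ t) (ψ 0) := ⟨h', hψ0gt.le⟩
      obtain ⟨t1, ht1, he⟩ := intermediate_value_Icc' ht
        (fun τ hτ => (hψ' τ hτ.1).continuousAt.continuousWithinAt) hmem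
      exact hhit t1 ht1.1 he
    have hvneg : ∀ t : ℝ, 0 ≤ t → vf (ψ t) < 0 :=
      fun t ht => vneg _ (hstay t ht) (hub t ht)
    have hanti : AntitoneOn ψ (Set.Ici 0) := by
      apply antitoneOn_of_deriv_nonpos (convex_Ici 0)
        (fun τ hτ => (hψ' τ hτ).continuousAt.continuousWithinAt)
      · rw [interior_Ici]
        exact fun x hx => (hψ' x (le_of_lt hx)).differentiableAt.differentiableWithinAt
      · rw [interior_Ici]
        intro x hx
        rw [(hψ' x (le_of_lt hx)).deriv]
        exact (hvneg x (le_of_lt hx)).le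
    obtain ⟨S, hS⟩ : ∃ S : Set ℝ, S = ψ '' Set.Ici 0 := ⟨_, rfl⟩
    have hSne : S.Nonempty := ⟨ψ 0, hS ▸ ⟨0, Set.self_mem_Ici, rfl⟩⟩
    have hSbdd : BddBelow S := ⟨ψstar, by
      rw [hS]; rintro y ⟨t, ht, rfl⟩; exact (hstay t (Set.mem_Ici.mp ht)).le⟩
    obtain ⟨L, hL⟩ : ∃ L : ℝ, L = sInf S := ⟨_, rfl⟩
    have hLge : ψstar ≤ L := by
      rw [hL]
      exact le_csInf hSne (by
        rw [hS]; rintro y ⟨t, ht, rfl⟩; exact (hstay t (Set.mem_Ici.mp ht)).le)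
    have hLle : ∀ t : ℝ, 0 ≤ t → L ≤ ψ t := fun t ht => by
      rw [hL]; exact csInf_le hSbdd (hS ▸ ⟨t, Set.mem_Ici.mpr ht, rfl⟩)
    have htendL : Tendsto ψ atTop (𝓝 L) := by
      rw [Metric.tendsto_atTop]
      intro ε hε
      obtain ⟨y, hyS, hy⟩ := exists_lt_of_csInf_lt hSne
        (show sInf S < L + ε by rw [← hL]; linarith)
      rw [hS] at hyS
      obtain ⟨t0, ht0, rfl⟩ := hyS
      rw [Set.mem_Ici] at ht0
      refine ⟨t0, fun t ht => ?_⟩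
      have h1 : L ≤ ψ t := hLle t (ht0.trans ht)
      have h2 : ψ t ≤ ψ t0 := hanti (Set.mem_Ici.mpr ht0) (Set.mem_Ici.mpr (ht0.trans ht)) ht
      rw [Real.dist_eq, abs_lt]
      constructor <;> linarith
    suffices hLeq : L = ψstar by rwa [hLeq] at htendL
    by_contra hLne
    have hLgt : ψstar < L := lt_of_le_of_ne hLge (Ne.symm hLne)
    have hLlt : L < 1/2 - ψstar := lt_of_le_of_lt (hLle 0 le_rfl) (hub 0 le_rfl)
    have hvL : vf L < 0 := vneg L hLgt hLlt
    obtain ⟨c, hc⟩ : ∃ c : ℝ, c = -vf L := ⟨_, rfl⟩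
    have hcpos : 0 < c := by rw [hc]; linarith
    obtain ⟨ε0, hε0⟩ : ∃ e : ℝ, e = c / (8 * k * Real.pi) := ⟨_, rfl⟩
    have hε0pos : 0 < ε0 := by rw [hε0]; exact div_pos hcpos (by positivity)
    obtain ⟨T0, hT0⟩ := Metric.tendsto_atTop.mp htendL ε0 hε0pos
    obtain ⟨T, hT⟩ : ∃ T : ℝ, T = max T0 0 := ⟨_, rfl⟩
    have hTnn : 0 ≤ T := by rw [hT]; exact le_max_right _ _
    have hbd : ∀ t : ℝ, T ≤ t → vf (ψ t) ≤ -(c/2) := by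
      intro t ht
      have h1 : |ψ t - L| < ε0 := by
        have htt : max T0 0 ≤ t := le_of_eq_of_le hT.symm ht
        have := hT0 t ((le_max_left _ _).trans htt)
        rwa [Real.dist_eq] at this
      have h2 := sin_diff_le_aux (2 * Real.pi * L) (2 * Real.pi * (ψ t))
      have h3 : |2 * Real.pi * L - 2 * Real.pi * (ψ t)| = 2 * Real.pi * |ψ t - L| := by
        rw [abs_sub_comm, show 2 * Real.pi * (ψ t) - 2 * Real.pi * L
          = (2 * Real.pi) * (ψ t - L) by ring, abs_mul,
          abs_of_pos (by positivity : (0:ℝ) < 2 * Real.pi)]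
      have h4 : Real.sin (2 * Real.pi * L) - Real.sin (2 * Real.pi * (ψ t))
          ≤ 2 * Real.pi * ε0 := by
        have := le_abs_self (Real.sin (2 * Real.pi * L) - Real.sin (2 * Real.pi * (ψ t)))
        nlinarith
      have h5 : vf (ψ t) = vf L + 2 * k * (Real.sin (2 * Real.pi * L)
          - Real.sin (2 * Real.pi * (ψ t))) := by simp only [hvf]; ring
      have h6 : 2 * k * (2 * Real.pi * ε0) = c / 2 := by
        rw [hε0]; field_simp; ring
      have hvLc : vf L = -c := by rw [hc]; ring
      have h7 : 2 * k * (Real.sin (2 * Real.pi * L) - Real.sin (2 * Real.pi * (ψ t)))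
          ≤ 2 * k * (2 * Real.pi * ε0) := mul_le_mul_of_nonneg_left h4 (by linarith)
      linarith
    have hanti2 : AntitoneOn (fun t => ψ t + (c/2) * t) (Set.Ici T) := by
      have hderiv : ∀ x : ℝ, 0 ≤ x →
          HasDerivAt (fun t => ψ t + (c/2) * t) (vf (ψ x) + c/2) x := by
        intro x hx
        have h := (hψ' x hx).add ((hasDerivAt_id x).const_mul (c/2))
        exact h.congr_deriv (by ring)
      apply antitoneOn_of_deriv_nonpos (convex_Ici T)
        (fun τ hτ => (hderiv τ (hTnn.trans hτ)).continuousAt.continuousWithinAt)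
      · rw [interior_Ici]
        exact fun x hx =>
          (hderiv x (hTnn.trans hx.le)).differentiableAt.differentiableWithinAt
      · rw [interior_Ici]
        intro x hx
        rw [(hderiv x (hTnn.trans hx.le)).deriv]
        have := hbd x hx.le
        linarith
    obtain ⟨t1, ht1def⟩ : ∃ t1 : ℝ, t1 = T + 2 * (ψ T - ψstar + 1) / c := ⟨_, rfl⟩
    have hψT : ψstar < ψ T := hstay T hTnn
    have ht1ge : T ≤ t1 := by
      rw [ht1def]
      have : 0 ≤ 2 * (ψ T - ψstar + 1) / c := div_nonneg (by nlinarith) hcpos.le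
      linarith
    have hkey : ψ t1 + (c/2) * t1 ≤ ψ T + (c/2) * T :=
      hanti2 Set.self_mem_Ici (Set.mem_Ici.mpr ht1ge) ht1ge
    have harith : (c/2) * (t1 - T) = ψ T - ψstar + 1 := by
      rw [ht1def]
      field_simp
      ring
    have : ψ t1 ≤ ψstar - 1 := by nlinarith
    have := hstay t1 (hTnn.trans ht1ge)
    linarith

/-- Two diffusively coupled phase oscillators with frequency mismatch
`Δ`, `|Δ| < 2k`, frequency synchronize: the phase difference `ψ`, satisfying
`ψ' = Δ − 2k·sin(2πψ)` with `ψ(0)` in the basin `(−1/2 − ψ*, 1/2 − ψ*)` of the stable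
equilibrium `ψ* = arcsin(Δ/(2k))/(2π) ∈ (−1/4, 1/4)`, converges to `ψ*`. In particular,
if `ε ∈ (0, 1/2)` and `arcsin(|Δ|/(2k)) < 2πε`, then `|ψ*| < ε` and eventually
`|ψ(t)| < ε` (the oscillators phase synchronize to within `ε`). -/
theorem mismatched_oscillators_phase_synchronize
    (k Δ : ℝ) (hk : 0 < k) (hΔ : |Δ| < 2 * k)
    (ψstar : ℝ) (hψstar : ψstar = Real.arcsin (Δ / (2 * k)) / (2 * Real.pi))
    (ψ : ℝ → ℝ)
    (hψ : ∀ t : ℝ, 0 ≤ t →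
      HasDerivAt ψ (Δ - 2 * k * Real.sin (2 * Real.pi * ψ t)) t)
    (h0 : ψ 0 ∈ Set.Ioo (-(1 / 2) - ψstar) (1 / 2 - ψstar)) :
    ψstar ∈ Set.Ioo (-(1 / 4) : ℝ) (1 / 4) ∧
    Tendsto ψ atTop (𝓝 ψstar) ∧
    (∀ ε : ℝ, 0 < ε → ε < 1 / 2 → Real.arcsin (|Δ| / (2 * k)) < 2 * Real.pi * ε →
      |ψstar| < ε ∧ ∃ T : ℝ, 0 ≤ T ∧ ∀ t : ℝ, T ≤ t → |ψ t| < ε) := by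
  have hπ := Real.pi_pos
  have hk2 : (0:ℝ) < 2 * k := by linarith
  have habs : |Δ / (2 * k)| < 1 := by
    rw [abs_div, abs_of_pos hk2]
    exact (div_lt_one hk2).mpr hΔ
  obtain ⟨hl1, hl2⟩ := abs_lt.mp habs
  have hθl : -(Real.pi/2) < Real.arcsin (Δ / (2 * k)) :=
    Real.neg_pi_div_two_lt_arcsin.mpr hl1
  have hθu : Real.arcsin (Δ / (2 * k)) < Real.pi/2 :=
    Real.arcsin_lt_pi_div_two.mpr hl2
  have hmem : ψstar ∈ Set.Ioo (-(1 / 4) : ℝ) (1 / 4) := by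
    constructor
    · rw [hψstar, lt_div_iff₀ (by positivity : (0:ℝ) < 2 * Real.pi)]
      nlinarith
    · rw [hψstar, div_lt_iff₀ (by positivity : (0:ℝ) < 2 * Real.pi)]
      nlinarith
  have htend : Tendsto ψ atTop (𝓝 ψstar) := by
    rcases le_total ψstar (ψ 0) with h | h
    · exact oscillators_aux k Δ hk hΔ ψstar hψstar ψ hψ h0 h
    · have haux := oscillators_aux k (-Δ) hk (by rwa [abs_neg]) (-ψstar)
        (by rw [hψstar, neg_div (2*k) Δ, Real.arcsin_neg, neg_div])
        (fun t => -ψ t)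
        (by
          intro t ht
          have h := (hψ t ht).neg
          have heq : -(Δ - 2 * k * Real.sin (2 * Real.pi * ψ t))
              = -Δ - 2 * k * Real.sin (2 * Real.pi * (-ψ t)) := by
            rw [show 2 * Real.pi * (-ψ t) = -(2 * Real.pi * ψ t) by ring, Real.sin_neg]
            ring
          rwa [heq] at h)
        (Set.mem_Ioo.mpr ⟨by linarith [h0.2], by linarith [h0.1]⟩)
        (by simpa using neg_le_neg h)
      have := haux.neg
      simpa using this
  refine ⟨hmem, htend, ?_⟩
  intro ε hε hε2 harc
  have habsθ : |Real.arcsin (Δ / (2 * k))| = Real.arcsin (|Δ| / (2 * k)) := by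
    rcases le_or_gt 0 Δ with hd | hd
    · rw [abs_of_nonneg hd, abs_of_nonneg]
      exact Real.arcsin_nonneg.mpr (by positivity)
    · have hq : Δ / (2 * k) < 0 := div_neg_of_neg_of_pos hd hk2
      have hneg : Real.arcsin (Δ / (2 * k)) < 0 := by
        have h' : 0 < Real.arcsin (-(Δ / (2 * k))) :=
          Real.arcsin_pos.mpr (neg_pos.mpr hq)
        rw [Real.arcsin_neg] at h'
        linarith
      rw [abs_of_neg hneg, abs_of_neg hd, neg_div (2 * k) Δ, Real.arcsin_neg]
  have hψabs : |ψstar| < ε := by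
    rw [hψstar, abs_div, abs_of_pos (by positivity : (0:ℝ) < 2 * Real.pi), habsθ,
      div_lt_iff₀ (by positivity : (0:ℝ) < 2 * Real.pi)]
    linarith
  refine ⟨hψabs, ?_⟩
  obtain ⟨T0, hT0⟩ := Metric.tendsto_atTop.mp htend (ε - |ψstar|) (by linarith)
  refine ⟨max T0 0, le_max_right _ _, fun t ht => ?_⟩
  have hd := hT0 t ((le_max_left _ _).trans ht)
  rw [Real.dist_eq] at hd
  calc |ψ t| = |(ψ t - ψstar) + ψstar| := by ring_nf
    _ ≤ |ψ t - ψstar| + |ψstar| := abs_add_le _ _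
    _ < ε := by linarith
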